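/- Let m and n be positive even integers with m dividing n. The number of group homomorphisms from D_m into D_n is 4 + 4n + m·n. -/

import Mathlib

open DihedralGroup

namespace NumHomAux

variable {G : Type*} [Group G]

private theorem pow_mod_eq {m : ℕ} {a : G} (ha : a ^ m = 1) (x : ℕ) :
    a ^ (x % m) = a ^ x := by
  conv_rhs => rw [← Nat.div_add_mod x m]
  rw [pow_add, pow_mul, ha, one_pow, one_mul]

private theorem Aadd {m : ℕ} [NeZero m] {a : G} (ha : a ^ m = 1) (i j : ZMod m) :
    a ^ (i + j).val = a ^ i.val * a ^ j.val := by
  rw [ZMod.val_add, pow_mod_eq ha, pow_add]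

private theorem Aneg {m : ℕ} [NeZero m] {a : G} (ha : a ^ m = 1) (i : ZMod m) :
    a ^ (-i).val = (a ^ i.val)⁻¹ := by
  apply eq_inv_of_mul_eq_one_left
  rw [← Aadd ha, neg_add_cancel, ZMod.val_zero, pow_zero]

private theorem conj_pow' {a b : G} (hb : b * b = 1) (hab : b * a * b = a⁻¹) (k : ℕ) :
    b * a ^ k * b = (a ^ k)⁻¹ := by
  induction k with
  | zero => simpa using hb
  | succ k ih =>
    have key : b * a ^ (k + 1) * b = (b * a ^ k * b) * (b * a * b) := by
      rw [pow_succ]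
      have h2 : (b * a ^ k * b) * (b * a * b) = b * a ^ k * (b * b) * (a * b) := by group
      rw [h2, hb, mul_one]
      group
    rw [key, ih, hab, ← mul_inv_rev, ← pow_succ']

/-- The homomorphism from a dihedral group determined by images of the generators. -/
private def homOfPair (m : ℕ) [NeZero m] (a b : G) (ha : a ^ m = 1)
    (hb : b * b = 1) (hab : b * a * b = a⁻¹) : DihedralGroup m →* G :=
  MonoidHom.mk' (fun x => match x with
    | .r i => a ^ i.val
    | .sr i => b * a ^ i.val) (by
    have hcomm : ∀ k : ℕ, a ^ k * b = b * (a ^ k)⁻¹ := by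
      intro k
      calc a ^ k * b = (b * b) * a ^ k * b := by rw [hb, one_mul]
      _ = b * (b * a ^ k * b) := by group
      _ = b * (a ^ k)⁻¹ := by rw [conj_pow' hb hab]
    rintro (i | i) (j | j)
    · show a ^ (i + j).val = a ^ i.val * a ^ j.val
      exact Aadd ha i j
    · show b * a ^ (j - i).val = a ^ i.val * (b * a ^ j.val)
      rw [sub_eq_add_neg, add_comm, Aadd ha, Aneg ha, ← mul_assoc, ← mul_assoc, hcomm]
    · show b * a ^ (i + j).val = b * a ^ i.val * a ^ j.val
      rw [Aadd ha, mul_assoc]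
    · show a ^ (j - i).val = b * a ^ i.val * (b * a ^ j.val)
      have h2 : b * a ^ i.val * (b * a ^ j.val) = (b * a ^ i.val * b) * a ^ j.val := by group
      rw [h2, conj_pow' hb hab, sub_eq_add_neg, add_comm, Aadd ha, Aneg ha])

private theorem rel3 {m : ℕ} : (sr 0 * r 1 * sr 0 : DihedralGroup m) = (r 1)⁻¹ := by
  have h : ((r 1 : DihedralGroup m))⁻¹ = r (-1) := rfl
  rw [h, sr_mul_r, sr_mul_sr, zero_add, zero_sub]

/-- Homomorphisms from `DihedralGroup m` correspond to pairs satisfying the relations. -/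
private def homEquiv (G : Type*) [Group G] (m : ℕ) [NeZero m] [Fact (1 < m)] :
    (DihedralGroup m →* G) ≃
      {p : G × G // p.1 ^ m = 1 ∧ p.2 * p.2 = 1 ∧ p.2 * p.1 * p.2 = p.1⁻¹} where
  toFun f := ⟨(f (r 1), f (sr 0)), by
    refine ⟨?_, ?_, ?_⟩
    · rw [← map_pow, r_one_pow_n, map_one]
    · rw [← map_mul, sr_mul_self, map_one]
    · rw [← map_mul, ← map_mul, ← map_inv, rel3]⟩
  invFun p := homOfPair m p.1.1 p.1.2 p.2.1 p.2.2.1 p.2.2.2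
  left_inv f := by
    apply MonoidHom.ext
    rintro (i | i)
    · show f (r 1) ^ i.val = f (r i)
      rw [← map_pow, r_one_pow, ZMod.natCast_zmod_val]
    · show f (sr 0) * f (r 1) ^ i.val = f (sr i)
      rw [← map_pow, ← map_mul, r_one_pow, ZMod.natCast_zmod_val, sr_mul_r, zero_add]
  right_inv := by
    rintro ⟨⟨a, b⟩, h1, h2, h3⟩
    apply Subtype.ext
    have e1 : homOfPair m a b h1 h2 h3 (r 1) = a := by
      show a ^ (1 : ZMod m).val = a
      rw [ZMod.val_one, pow_one]
    have e2 : homOfPair m a b h1 h2 h3 (sr 0) = b := by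
      show b * a ^ (0 : ZMod m).val = b
      rw [ZMod.val_zero, pow_zero, mul_one]
    simp [e1, e2]

/-! ### Torsion elements of `ZMod n` -/

variable {n : ℕ}

/-- The canonical embedding of `ZMod k` onto the `k`-torsion of `ZMod n`. -/
private def e (n k : ℕ) (x : ZMod k) : ZMod n := ((x.val * (n / k) : ℕ) : ZMod n)

private theorem e_inj {k : ℕ} [NeZero k] [NeZero n] (hk : k ∣ n) :
    Function.Injective (e n k) := by
  have hn : 0 < n := Nat.pos_of_ne_zero (NeZero.ne n)
  have hk0 : 0 < k := Nat.pos_of_ne_zero (NeZero.ne k)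
  have hq : 0 < n / k := Nat.div_pos (Nat.le_of_dvd hn hk) hk0
  have hkn : k * (n / k) = n := Nat.mul_div_cancel' hk
  intro x y hxy
  have hx : x.val * (n / k) < n := by
    calc x.val * (n / k) < k * (n / k) :=
      Nat.mul_lt_mul_of_lt_of_le (ZMod.val_lt x) le_rfl hq
    _ = n := hkn
  have hy : y.val * (n / k) < n := by
    calc y.val * (n / k) < k * (n / k) :=
      Nat.mul_lt_mul_of_lt_of_le (ZMod.val_lt y) le_rfl hq
    _ = n := hkn
  have := congrArg ZMod.val hxy
  rw [e, e, ZMod.val_cast_of_lt hx, ZMod.val_cast_of_lt hy] at this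
  exact ZMod.val_injective k (Nat.eq_of_mul_eq_mul_right hq this)

private theorem e_torsion {k : ℕ} (hk : k ∣ n) (x : ZMod k) :
    (k : ZMod n) * e n k x = 0 := by
  have hkn : k * (n / k) = n := Nat.mul_div_cancel' hk
  have h2 : k * (x.val * (n / k)) = x.val * n := by
    calc k * (x.val * (n / k)) = x.val * (k * (n / k)) := by ring
    _ = x.val * n := by rw [hkn]
  have h3 : (k : ZMod n) * ((x.val * (n / k) : ℕ) : ZMod n)
      = ((k * (x.val * (n / k)) : ℕ) : ZMod n) := by push_cast; ring
  rw [e, h3, h2]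
  push_cast
  simp

private theorem e_surj {k : ℕ} [NeZero k] [NeZero n] (hk : k ∣ n) (t : ZMod n)
    (ht : (k : ZMod n) * t = 0) : ∃ x : ZMod k, e n k x = t := by
  have hn : 0 < n := Nat.pos_of_ne_zero (NeZero.ne n)
  have hk0 : 0 < k := Nat.pos_of_ne_zero (NeZero.ne k)
  have hq : 0 < n / k := Nat.div_pos (Nat.le_of_dvd hn hk) hk0
  have hkn : k * (n / k) = n := Nat.mul_div_cancel' hk
  have hdvd : n ∣ k * t.val := by
    rw [← ZMod.natCast_eq_zero_iff]
    push_cast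
    rw [ZMod.natCast_zmod_val, ht]
  have hdvd2 : n / k ∣ t.val := by
    refine Nat.dvd_of_mul_dvd_mul_left hk0 ?_
    rw [hkn]; exact hdvd
  set q := t.val / (n / k) with hqdef
  have hmul : q * (n / k) = t.val := Nat.div_mul_cancel hdvd2
  have hqlt : q < k := by
    have : q * (n / k) < k * (n / k) := by rw [hmul, hkn]; exact ZMod.val_lt t
    exact Nat.lt_of_mul_lt_mul_right this
  refine ⟨(q : ZMod k), ?_⟩
  rw [e, ZMod.val_cast_of_lt hqlt, hmul, ZMod.natCast_zmod_val]

/-! ### Powers and inverses in the dihedral group -/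

private theorem r_pow (t : ZMod n) (k : ℕ) :
    (r t : DihedralGroup n) ^ k = r ((k : ZMod n) * t) := by
  induction k with
  | zero => simp
  | succ k ih =>
    rw [pow_succ, ih, r_mul_r]
    congr 1
    push_cast
    ring

private theorem inv_r (t : ZMod n) : (r t : DihedralGroup n)⁻¹ = r (-t) := rfl

private theorem inv_sr (t : ZMod n) : (sr t : DihedralGroup n)⁻¹ = sr t := rfl

end NumHomAux

open NumHomAux in
theorem numHom_even_even_dvd (m n : ℕ) (hm : 0 < m) (hn : 0 < n) (hme : Even m) (hne : Even n)
    (hdvd : m ∣ n) :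
    Nat.card (DihedralGroup m →* DihedralGroup n) = 4 + 4 * n + m * n := by
  haveI : NeZero m := ⟨hm.ne'⟩
  haveI : NeZero n := ⟨hn.ne'⟩
  have hm2 : 2 ≤ m := by obtain ⟨k, rfl⟩ := hme; omega
  have hn2 : 2 ≤ n := by obtain ⟨k, rfl⟩ := hne; omega
  haveI : Fact (1 < m) := ⟨hm2⟩
  have h2n : (2 : ℕ) ∣ n := hne.two_dvd
  have h2m : (2 : ℕ) ∣ m := hme.two_dvd
  -- basic facts about 2-torsion elements
  have htor2 : ∀ d : ZMod 2, e n 2 d + e n 2 d = 0 := by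
    intro d
    have := e_torsion (n := n) h2n d
    rwa [show ((2 : ℕ) : ZMod n) = 2 by push_cast; ring, two_mul] at this
  have hmtor2 : ∀ d : ZMod 2, (m : ZMod n) * e n 2 d = 0 := by
    intro d
    obtain ⟨l, hl⟩ := h2m
    have : (m : ZMod n) = l * 2 := by rw [hl]; push_cast; ring
    rw [this, mul_assoc, two_mul, htor2, mul_zero]
  have hsr_pow_m : ∀ x : ZMod n, (sr x : DihedralGroup n) ^ m = 1 := by
    intro x
    obtain ⟨l, hl⟩ := h2m
    have : (sr x : DihedralGroup n) ^ m = ((sr x : DihedralGroup n) * sr x) ^ l := by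
      rw [← sq, ← pow_mul, hl, two_mul]
    rw [this, sr_mul_self, one_pow]
  have condA : ∀ (x : ZMod m) (y : ZMod n),
      ((r (e n m x) : DihedralGroup n) ^ m = 1 ∧ (sr y : DihedralGroup n) * sr y = 1 ∧
        (sr y : DihedralGroup n) * r (e n m x) * sr y = (r (e n m x))⁻¹) := by
    intro x y
    refine ⟨?_, sr_mul_self y, ?_⟩
    · rw [NumHomAux.r_pow, e_torsion hdvd, one_def]
    · rw [sr_mul_r, sr_mul_sr, NumHomAux.inv_r]
      congr 1
      ring
  have condB : ∀ (c d : ZMod 2),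
      ((r (e n 2 c) : DihedralGroup n) ^ m = 1 ∧ (r (e n 2 d) : DihedralGroup n) * r (e n 2 d) = 1 ∧
        (r (e n 2 d) : DihedralGroup n) * r (e n 2 c) * r (e n 2 d) = (r (e n 2 c))⁻¹) := by
    intro c d
    refine ⟨?_, ?_, ?_⟩
    · rw [NumHomAux.r_pow, hmtor2, one_def]
    · rw [r_mul_r, htor2, one_def]
    · rw [r_mul_r, r_mul_r, NumHomAux.inv_r]
      congr 1
      have h1 := htor2 c
      have h2 := htor2 d
      linear_combination h1 + h2
  have condC : ∀ (x : ZMod n) (d : ZMod 2),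
      ((sr x : DihedralGroup n) ^ m = 1 ∧ (r (e n 2 d) : DihedralGroup n) * r (e n 2 d) = 1 ∧
        (r (e n 2 d) : DihedralGroup n) * sr x * r (e n 2 d) = (sr x)⁻¹) := by
    intro x d
    refine ⟨hsr_pow_m x, ?_, ?_⟩
    · rw [r_mul_r, htor2, one_def]
    · rw [r_mul_sr, sr_mul_r, NumHomAux.inv_sr]
      congr 1
      ring
  have condD : ∀ (x : ZMod n) (d : ZMod 2),
      ((sr x : DihedralGroup n) ^ m = 1 ∧ (sr (x + e n 2 d) : DihedralGroup n) * sr (x + e n 2 d) = 1 ∧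
        (sr (x + e n 2 d) : DihedralGroup n) * sr x * sr (x + e n 2 d) = (sr x)⁻¹) := by
    intro x d
    refine ⟨hsr_pow_m x, sr_mul_self _, ?_⟩
    · rw [sr_mul_sr, r_mul_sr, NumHomAux.inv_sr]
      congr 1
      have h1 := htor2 d
      linear_combination h1
  let Ψ : ((ZMod m × ZMod n) ⊕ (ZMod 2 × ZMod 2) ⊕ (ZMod n × ZMod 2) ⊕ (ZMod n × ZMod 2)) → {p : DihedralGroup n × DihedralGroup n // p.1 ^ m = 1 ∧ p.2 * p.2 = 1 ∧ p.2 * p.1 * p.2 = p.1⁻¹} := fun u => match u with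
    | .inl (x, y) => ⟨(r (e n m x), sr y), condA x y⟩
    | .inr (.inl (c, d)) => ⟨(r (e n 2 c), r (e n 2 d)), condB c d⟩
    | .inr (.inr (.inl (x, d))) => ⟨(sr x, r (e n 2 d)), condC x d⟩
    | .inr (.inr (.inr (x, d))) => ⟨(sr x, sr (x + e n 2 d)), condD x d⟩
  have hΨbij : Function.Bijective Ψ := by
    constructor
    · intro u v h
      have h1 := congrArg (fun p : {p : DihedralGroup n × DihedralGroup n // p.1 ^ m = 1 ∧ p.2 * p.2 = 1 ∧ p.2 * p.1 * p.2 = p.1⁻¹} => p.1.1) h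
      have h2 := congrArg (fun p : {p : DihedralGroup n × DihedralGroup n // p.1 ^ m = 1 ∧ p.2 * p.2 = 1 ∧ p.2 * p.1 * p.2 = p.1⁻¹} => p.1.2) h
      clear h
      rcases u with ⟨x, y⟩ | ⟨c, d⟩ | ⟨x, d⟩ | ⟨x, d⟩ <;>
          rcases v with ⟨x', y'⟩ | ⟨c', d'⟩ | ⟨x', d'⟩ | ⟨x', d'⟩ <;>
        simp only [Ψ, r.injEq, sr.injEq, reduceCtorEq] at h1 h2
      · simp only [Sum.inl.injEq, Prod.mk.injEq]
        exact ⟨e_inj hdvd h1, h2⟩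
      · simp only [Sum.inr.injEq, Sum.inl.injEq, Prod.mk.injEq]
        exact ⟨e_inj h2n h1, e_inj h2n h2⟩
      · simp only [Sum.inr.injEq, Sum.inl.injEq, Prod.mk.injEq]
        exact ⟨h1, e_inj h2n h2⟩
      · simp only [Sum.inr.injEq, Prod.mk.injEq]
        refine ⟨h1, e_inj h2n ?_⟩
        rw [h1] at h2
        exact add_left_cancel h2
    · rintro ⟨⟨(t | t), (u | u)⟩, h1, h2, h3⟩
      · -- a = r t, b = r u
        rw [r_mul_r, one_def, r.injEq] at h2
        rw [r_mul_r, r_mul_r, NumHomAux.inv_r, r.injEq] at h3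
        obtain ⟨d, hd⟩ := e_surj h2n u (by push_cast; linear_combination h2)
        obtain ⟨c, hc⟩ := e_surj h2n t (by push_cast; linear_combination h3 - h2)
        exact ⟨Sum.inr (Sum.inl (c, d)), Subtype.ext (by simp [Ψ, hc, hd])⟩
      · -- a = r t, b = sr u
        rw [NumHomAux.r_pow, one_def, r.injEq] at h1
        obtain ⟨x, hx⟩ := e_surj hdvd t h1
        exact ⟨Sum.inl (x, u), Subtype.ext (by simp [Ψ, hx])⟩
      · -- a = sr t, b = r u
        rw [r_mul_r, one_def, r.injEq] at h2
        obtain ⟨d, hd⟩ := e_surj h2n u (by push_cast; linear_combination h2)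
        exact ⟨Sum.inr (Sum.inr (Sum.inl (t, d))), Subtype.ext (by simp [Ψ, hd])⟩
      · -- a = sr t, b = sr u
        rw [sr_mul_sr, r_mul_sr, NumHomAux.inv_sr, sr.injEq] at h3
        obtain ⟨d, hd⟩ := e_surj h2n (u - t) (by push_cast; linear_combination h3)
        refine ⟨Sum.inr (Sum.inr (Sum.inr (t, d))), Subtype.ext ?_⟩
        simp only [Ψ, hd]
        rw [add_sub_cancel]
  calc Nat.card (DihedralGroup m →* DihedralGroup n)
      = Nat.card {p : DihedralGroup n × DihedralGroup n // p.1 ^ m = 1 ∧ p.2 * p.2 = 1 ∧ p.2 * p.1 * p.2 = p.1⁻¹} := Nat.card_congr (homEquiv (DihedralGroup n) m)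
    _ = Nat.card ((ZMod m × ZMod n) ⊕ (ZMod 2 × ZMod 2) ⊕ (ZMod n × ZMod 2) ⊕ (ZMod n × ZMod 2)) := (Nat.card_congr (Equiv.ofBijective Ψ hΨbij)).symm
    _ = 4 + 4 * n + m * n := by
        simp only [Nat.card_sum, Nat.card_prod, Nat.card_zmod]
        ring
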